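/- arXiv:1803.06156 — 3 statements merged into one kernel-verified Lean document; each statement's English description precedes it below -/
import Mathlib

section
/- For each partition 𝓘 of {1,...,N} there exists a partition 𝓘' such that every segment of 𝓘', except possibly the leftmost one, has length at least k, and such that Σ_{I'∈𝓘'} E^{I'} ≤ Σ_{I∈𝓘} E^I and |𝓘'| ≤ |𝓘|. -/
open Finset Matrix

/-- `diffEnergy k q v = ‖∇ᵏ v‖₂²`, where `∇ᵏ` is the k-th order finite difference
operator whose rows are shifts of the k-fold convolution of `(-1, 1)` with itself;
it is the empty map (energy `0`) when `q ≤ k`. -/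
noncomputable def diffEnergy (k q : ℕ) (v : Fin q → ℝ) : ℝ :=
  ∑ i : Fin (q - k), (∑ j : Fin (k + 1),
    (-1 : ℝ) ^ (k - j.val) * (Nat.choose k j.val : ℝ) *
      v ⟨i.val + j.val, by have hi := i.isLt; have hj := j.isLt; omega⟩) ^ 2

/-- The k-th order smoothing spline approximation error
`E = min_v ‖v - g‖₂² + β^{2k} ‖∇ᵏ v‖₂²` for data `g` on an interval of length `q`. -/
noncomputable def splineError (k : ℕ) (β : ℝ) {q : ℕ} (g : Fin q → ℝ) : ℝ :=
  ⨅ v : Fin q → ℝ, (∑ i, (v i - g i) ^ 2) + β ^ (2 * k) * diffEnergy k q v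

/-- A partition of `{1,...,N}` into consecutive discrete intervals, encoded by its
boundaries `0 = b 0 < b 1 < ... < b M = N`; the m-th segment consists of the
(0-indexed) indices `b m, ..., b (m+1) - 1`, and `M` is the number of segments. -/
structure IPart (N : ℕ) where
  M : ℕ
  b : Fin (M + 1) → ℕ
  mono : StrictMono b
  first : b 0 = 0
  last : b (Fin.last M) = N

/-- Length of the `m`-th segment of the partition. -/
def IPart.len {N : ℕ} (P : IPart N) (m : Fin P.M) : ℕ :=
  P.b m.succ - P.b m.castSucc

theorem IPart.idx_lt {N : ℕ} (P : IPart N) (m : Fin P.M) (i : Fin (P.len m)) :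
    P.b m.castSucc + i.val < N := by
  have h1 : i.val < P.b m.succ - P.b m.castSucc := i.isLt
  have h2 : P.b m.succ ≤ N := by
    have h := P.mono.monotone (Fin.le_last m.succ)
    rwa [P.last] at h
  omega

/-- Restriction `f_I` of a signal `f` to the `m`-th segment `I` of the partition. -/
def IPart.restrict {N : ℕ} (P : IPart N) (f : Fin N → ℝ) (m : Fin P.M) :
    Fin (P.len m) → ℝ :=
  fun i => f ⟨P.b m.castSucc + i.val, P.idx_lt m i⟩

/-- Total k-th order spline approximation error `Σ_{I∈𝓘} E^I` of a partition. -/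
noncomputable def segErrSum {N : ℕ} (k : ℕ) (β : ℝ) (f : Fin N → ℝ) (P : IPart N) : ℝ :=
  ∑ m : Fin P.M, splineError k β (P.restrict f m)
-- analysis lemmas
lemma diffEnergy_nonneg (k q : ℕ) (v : Fin q → ℝ) : 0 ≤ diffEnergy k q v :=
  Finset.sum_nonneg fun _ _ => sq_nonneg _

lemma splineError_le_apply (k : ℕ) {β : ℝ} (hβ : 0 ≤ β) {q : ℕ} (g v : Fin q → ℝ) :
    splineError k β g ≤ (∑ i, (v i - g i) ^ 2) + β ^ (2 * k) * diffEnergy k q v := by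
  apply ciInf_le
  refine ⟨0, ?_⟩
  rintro x ⟨w, rfl⟩
  exact add_nonneg (Finset.sum_nonneg fun _ _ => sq_nonneg _)
    (mul_nonneg (pow_nonneg hβ _) (diffEnergy_nonneg k q w))

lemma splineError_nonneg (k : ℕ) {β : ℝ} (hβ : 0 ≤ β) {q : ℕ} (g : Fin q → ℝ) :
    0 ≤ splineError k β g :=
  le_ciInf fun v => add_nonneg (Finset.sum_nonneg fun _ _ => sq_nonneg _)
    (mul_nonneg (pow_nonneg hβ _) (diffEnergy_nonneg k q v))

lemma diffEnergy_of_le {k q : ℕ} (h : q ≤ k) (v : Fin q → ℝ) : diffEnergy k q v = 0 := by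
  haveI : IsEmpty (Fin (q - k)) := ⟨fun i => absurd i.isLt (by omega)⟩
  simp [diffEnergy]

lemma splineError_of_le (k : ℕ) {β : ℝ} (hβ : 0 ≤ β) {q : ℕ} (h : q ≤ k) (g : Fin q → ℝ) :
    splineError k β g = 0 := by
  refine le_antisymm ?_ (splineError_nonneg k hβ g)
  have h2 := splineError_le_apply k hβ g g
  simpa [diffEnergy_of_le h] using h2

lemma fin_sum_le {q' q : ℕ} (h : q' ≤ q) (F : ℕ → ℝ) (hF : ∀ a, 0 ≤ F a) :
    ∑ i : Fin q', F i.val ≤ ∑ i : Fin q, F i.val := by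
  rw [Fin.sum_univ_eq_sum_range F q', Fin.sum_univ_eq_sum_range F q]
  exact Finset.sum_le_sum_of_subset_of_nonneg (Finset.range_subset_range.2 h)
    (fun a _ _ => hF a)

lemma splineError_mono (k : ℕ) {β : ℝ} (hβ : 0 ≤ β) {q q' : ℕ} (h : q' ≤ q) (g : Fin q → ℝ) :
    splineError k β (fun i : Fin q' => g (Fin.castLE h i)) ≤ splineError k β g := by
  apply le_ciInf
  intro v
  refine (splineError_le_apply k hβ _ (fun i => v (Fin.castLE h i))).trans ?_
  have hfit : (∑ i : Fin q', (v (Fin.castLE h i) - g (Fin.castLE h i)) ^ 2)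
      ≤ ∑ i : Fin q, (v i - g i) ^ 2 := by
    have l1 : (∑ i : Fin q', (v (Fin.castLE h i) - g (Fin.castLE h i)) ^ 2)
        = ∑ i : Fin q', (if hx : (i : ℕ) < q then (v ⟨i, hx⟩ - g ⟨i, hx⟩) ^ 2 else 0) :=
      Finset.sum_congr rfl fun i _ => by rw [dif_pos (lt_of_lt_of_le i.isLt h)]; rfl
    have l2 : (∑ i : Fin q, (v i - g i) ^ 2)
        = ∑ i : Fin q, (if hx : (i : ℕ) < q then (v ⟨i, hx⟩ - g ⟨i, hx⟩) ^ 2 else 0) :=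
      Finset.sum_congr rfl fun i _ => by rw [dif_pos i.isLt]
    rw [l1, l2]
    refine fin_sum_le h (fun a => if hx : a < q then (v ⟨a, hx⟩ - g ⟨a, hx⟩) ^ 2 else 0)
      fun a => ?_
    split
    · exact sq_nonneg _
    · exact le_rfl
  have hdiff : diffEnergy k q' (fun i => v (Fin.castLE h i)) ≤ diffEnergy k q v := by
    have l1 : diffEnergy k q' (fun i => v (Fin.castLE h i))
        = ∑ i : Fin (q' - k), (∑ j : Fin (k + 1),
            (-1 : ℝ) ^ (k - j.val) * (Nat.choose k j.val : ℝ) *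
            (if hx : (i : ℕ) + j.val < q then v ⟨(i : ℕ) + j.val, hx⟩ else 0)) ^ 2 := by
      unfold diffEnergy
      refine Finset.sum_congr rfl fun i _ => ?_
      congr 1
      refine Finset.sum_congr rfl fun j _ => ?_
      have hx : (i : ℕ) + j.val < q := by have := i.isLt; have := j.isLt; omega
      rw [dif_pos hx]; rfl
    have l2 : diffEnergy k q v
        = ∑ i : Fin (q - k), (∑ j : Fin (k + 1),
            (-1 : ℝ) ^ (k - j.val) * (Nat.choose k j.val : ℝ) *
            (if hx : (i : ℕ) + j.val < q then v ⟨(i : ℕ) + j.val, hx⟩ else 0)) ^ 2 := by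
      unfold diffEnergy
      refine Finset.sum_congr rfl fun i _ => ?_
      congr 1
      refine Finset.sum_congr rfl fun j _ => ?_
      have hx : (i : ℕ) + j.val < q := by have := i.isLt; have := j.isLt; omega
      rw [dif_pos hx]
    rw [l1, l2]
    refine fin_sum_le (by omega) (fun a => (∑ j : Fin (k + 1),
      (-1 : ℝ) ^ (k - j.val) * (Nat.choose k j.val : ℝ) *
      (if hx : a + j.val < q then v ⟨a + j.val, hx⟩ else 0)) ^ 2) fun a => sq_nonneg _
  exact add_le_add hfit (mul_le_mul_of_nonneg_left hdiff (pow_nonneg hβ _))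

lemma splineError_cast (k : ℕ) (β : ℝ) {q q' : ℕ} (h : q = q') (g : Fin q → ℝ) (g' : Fin q' → ℝ)
    (hg : ∀ i : Fin q, g i = g' (Fin.cast h i)) :
    splineError k β g = splineError k β g' := by
  subst h
  have hgg : g = g' := funext fun i => hg i
  rw [hgg]
-- partition constructions

def IPart.dropLastTo {N : ℕ} (P : IPart N) (m : ℕ) (hM : P.M = m + 1) (N' : ℕ)
    (hN' : P.b ⟨m, by omega⟩ = N') : IPart N' where
  M := m
  b := fun i => P.b ⟨i.val, by omega⟩
  mono := fun i j hij => P.mono (show (⟨i.val, by omega⟩ : Fin (P.M + 1)) < ⟨j.val, by omega⟩ from hij)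
  first := by
    exact (congrArg P.b (Fin.ext (by simp))).trans P.first
  last := by
    exact (congrArg P.b (Fin.ext (by simp))).trans hN'

def IPart.append {N' : ℕ} (P : IPart N') {N : ℕ} (h : N' < N) : IPart N where
  M := P.M + 1
  b := fun i => if hi : i.val < P.M + 1 then P.b ⟨i.val, hi⟩ else N
  mono := by
    intro i j hij
    have hij' : i.val < j.val := hij
    dsimp only
    by_cases hj : j.val < P.M + 1
    · have hi : i.val < P.M + 1 := by omega
      rw [dif_pos hi, dif_pos hj]
      exact P.mono (show (⟨i.val, hi⟩ : Fin (P.M + 1)) < ⟨j.val, hj⟩ from hij')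
    · rw [dif_neg hj]
      by_cases hi : i.val < P.M + 1
      · rw [dif_pos hi]
        calc P.b ⟨i.val, hi⟩ ≤ P.b (Fin.last P.M) := P.mono.monotone (Fin.le_last _)
          _ = N' := P.last
          _ < N := h
      · exact absurd (j.isLt) (by omega)
  first := by
    rw [dif_pos (show (0 : Fin (P.M + 2)).val < P.M + 1 by simp)]
    exact (congrArg P.b (Fin.ext (by simp))).trans P.first
  last := by
    rw [dif_neg (by simp)]

lemma IPart.append_b {N' : ℕ} (P : IPart N') {N : ℕ} (h : N' < N) (i : Fin (P.M + 2)) :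
    (P.append h).b i = if hi : i.val < P.M + 1 then P.b ⟨i.val, hi⟩ else N := rfl

lemma IPart.append_M {N' : ℕ} (P : IPart N') {N : ℕ} (h : N' < N) :
    (P.append h).M = P.M + 1 := rfl

lemma IPart.append_len {N' : ℕ} (P : IPart N') {N : ℕ} (h : N' < N) (m : Fin (P.M + 1)) :
    (P.append h).len m = if hm : m.val < P.M then P.len ⟨m.val, hm⟩ else N - N' := by
  unfold IPart.len
  by_cases hm : m.val < P.M
  · rw [dif_pos hm]
    erw [IPart.append_b, IPart.append_b]
    erw [dif_pos (show (m.succ).val < P.M + 1 by simp only [Fin.val_succ]; omega)]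
    erw [dif_pos (show (m.castSucc).val < P.M + 1 by simp only [Fin.coe_castSucc]; omega)]
    congr 1
  · rw [dif_neg hm]
    have hmv : m.val = P.M := by have := m.isLt; omega
    erw [IPart.append_b, IPart.append_b]
    erw [dif_neg (show ¬ (m.succ).val < P.M + 1 by simp only [Fin.val_succ]; omega)]
    erw [dif_pos (show (m.castSucc).val < P.M + 1 by simp only [Fin.coe_castSucc]; omega)]
    congr 1
    exact (congrArg P.b (Fin.ext (by simp [hmv]; exact hmv))).trans P.last
lemma segErrSum_ext {N : ℕ} (k : ℕ) (β : ℝ) (f : Fin N → ℝ) (P Q : IPart N) (hM : P.M = Q.M)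
    (hb : ∀ i : Fin (P.M + 1), P.b i = Q.b (Fin.cast (by omega) i)) :
    segErrSum k β f P = segErrSum k β f Q := by
  unfold segErrSum
  refine Fintype.sum_equiv (finCongr hM) _ _ fun m => ?_
  have hc : P.b m.castSucc = Q.b ((finCongr hM m).castSucc) :=
    (hb m.castSucc).trans (congrArg Q.b (Fin.ext rfl))
  have hs : P.b m.succ = Q.b ((finCongr hM m).succ) :=
    (hb m.succ).trans (congrArg Q.b (Fin.ext rfl))
  have hlen : P.len m = Q.len (finCongr hM m) := by
    unfold IPart.len
    rw [hc, hs]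
  refine splineError_cast k β hlen _ _ fun i => ?_
  unfold IPart.restrict
  congr 1
  exact Fin.ext (by simp only [Fin.coe_cast]; rw [hc])

lemma segErrSum_append {N' N : ℕ} (k : ℕ) (β : ℝ) (P : IPart N') (h : N' < N) (f : Fin N → ℝ) :
    segErrSum k β f (P.append h) =
      segErrSum k β (fun i : Fin N' => f ⟨i.val, lt_trans i.isLt h⟩) P
        + splineError k β (fun i : Fin (N - N') => f ⟨N' + i.val, by have := i.isLt; omega⟩) := by
  unfold segErrSum
  show (∑ m : Fin (P.M + 1), splineError k β ((P.append h).restrict f m)) = _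
  rw [Fin.sum_univ_castSucc]
  congr 1
  · refine Finset.sum_congr rfl fun m _ => ?_
    have hc : (P.append h).b (m.castSucc.castSucc) = P.b m.castSucc := by
      rw [IPart.append_b, dif_pos (show (m.castSucc.castSucc).val < P.M + 1 by
        simp only [Fin.coe_castSucc]; omega)]
      congr 1
    have hs : (P.append h).b (m.castSucc.succ) = P.b m.succ := by
      rw [IPart.append_b, dif_pos (show (m.castSucc.succ).val < P.M + 1 by
        simp only [Fin.val_succ, Fin.coe_castSucc]; omega)]
      exact congrArg P.b (Fin.ext (by simp))
    have hlen : (P.append h).len m.castSucc = P.len m := by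
      unfold IPart.len
      erw [hc, hs]
    refine splineError_cast k β hlen _ _ fun i => ?_
    unfold IPart.restrict
    dsimp only
    congr 1
    exact Fin.ext (by simp only [Fin.coe_cast]; erw [hc])
  · have hc : (P.append h).b ((Fin.last P.M).castSucc) = N' := by
      rw [IPart.append_b, dif_pos (show ((Fin.last P.M).castSucc).val < P.M + 1 by
        simp only [Fin.coe_castSucc, Fin.val_last]; omega)]
      exact (congrArg P.b (Fin.ext (by simp))).trans P.last
    have hs : (P.append h).b ((Fin.last P.M).succ) = N := by
      rw [IPart.append_b, dif_neg (show ¬ ((Fin.last P.M).succ).val < P.M + 1 by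
        simp only [Fin.val_succ, Fin.val_last]; omega)]
    have hlen : (P.append h).len (Fin.last P.M) = N - N' := by
      unfold IPart.len
      erw [hc, hs]
    refine splineError_cast k β hlen _ _ fun i => ?_
    unfold IPart.restrict
    congr 1
    exact Fin.ext (by simp only [Fin.coe_cast]; erw [hc])
set_option maxHeartbeats 1000000 in
theorem main_aux (k : ℕ) (β : ℝ) (hβ : 0 ≤ β) :
    ∀ (n N : ℕ) (f : Fin N → ℝ) (P : IPart N), N + P.M ≤ n →
      ∃ P' : IPart N, (∀ m : Fin P'.M, m.val ≠ 0 → k ≤ P'.len m) ∧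
        segErrSum k β f P' ≤ segErrSum k β f P ∧ P'.M ≤ P.M := by
  intro n
  induction n using Nat.strong_induction_on with
  | _ n ih =>
  intro N f P hn
  by_cases hM0 : P.M = 0
  · exact ⟨P, fun m _ => absurd m.isLt (by omega), le_rfl, le_rfl⟩
  obtain ⟨m, hM⟩ : ∃ m, P.M = m + 1 := ⟨P.M - 1, by omega⟩
  set N' := P.b ⟨m, by omega⟩ with hN'def
  have hN'N : N' < N := by
    have h1 : (⟨m, by omega⟩ : Fin (P.M + 1)) < Fin.last P.M := by
      rw [Fin.lt_def]; simp only [Fin.val_last]; omega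
    have h2 := P.mono h1
    rwa [P.last] at h2
  set P₂ : IPart N' := P.dropLastTo m hM N' rfl with hP2def
  have hP2M : P₂.M = m := rfl
  have hext : segErrSum k β f P = segErrSum k β f (P₂.append hN'N) := by
    refine segErrSum_ext k β f P (P₂.append hN'N) hM fun i => ?_
    erw [IPart.append_b]
    split
    · rfl
    · next h' =>
      simp only [Fin.coe_cast] at h'
      exact (congrArg P.b (Fin.ext (by simp only [Fin.val_last]; have := i.isLt; omega))).trans
        P.last
  have hPsplit : segErrSum k β f P
      = segErrSum k β (fun i : Fin N' => f ⟨i.val, lt_trans i.isLt hN'N⟩) P₂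
        + splineError k β (fun i : Fin (N - N') => f ⟨N' + i.val, by have := i.isLt; omega⟩) := by
    rw [hext]; exact segErrSum_append k β P₂ hN'N f
  by_cases hlen : k ≤ N - N'
  · -- the last segment is already long
    obtain ⟨P'', hg, he, hm2⟩ := ih (N' + m) (by omega) N'
      (fun i : Fin N' => f ⟨i.val, lt_trans i.isLt hN'N⟩) P₂ (le_of_eq (by rw [hP2M]))
    refine ⟨P''.append hN'N, ?_, ?_, ?_⟩
    · intro mm hmm
      have hl := IPart.append_len P'' hN'N mm
      rw [hl]
      split
      · next hlt => exact hg ⟨mm.val, hlt⟩ hmm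
      · exact hlen
    · rw [hPsplit, segErrSum_append k β P'' hN'N f]
      exact add_le_add_left he _
    · have hc : (P''.append hN'N).M = P''.M + 1 := rfl
      omega
  -- the last segment is short
  by_cases hm0 : m = 0
  · exact ⟨P, fun mm hmm => absurd (show mm.val = 0 by have := mm.isLt; omega) hmm, le_rfl, le_rfl⟩
  obtain ⟨m'', hm''⟩ : ∃ m'', m = m'' + 1 := ⟨m - 1, by omega⟩
  set a1 := P.b ⟨m'', by omega⟩ with ha1def
  have h12 : a1 < N' := P.mono (Fin.mk_lt_mk.mpr (by omega))
  set P₃ : IPart a1 := P₂.dropLastTo m'' (by rw [hP2M, hm'']) a1 rfl with hP3def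
  have hP3M : P₃.M = m'' := rfl
  have hext2 : segErrSum k β (fun i : Fin N' => f ⟨i.val, lt_trans i.isLt hN'N⟩) P₂
      = segErrSum k β (fun i : Fin N' => f ⟨i.val, lt_trans i.isLt hN'N⟩) (P₃.append h12) := by
    refine segErrSum_ext k β _ P₂ (P₃.append h12) (by rw [hP2M, hm'']; rfl) fun i => ?_
    erw [IPart.append_b]
    split
    · rfl
    · next h' =>
      simp only [Fin.coe_cast] at h'
      exact (congrArg P₂.b (Fin.ext (by simp only [Fin.val_last]; have := i.isLt; omega))).trans
        P₂.last
  have hsplit2 : segErrSum k β (fun i : Fin N' => f ⟨i.val, lt_trans i.isLt hN'N⟩) P₂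
      = segErrSum k β (fun i : Fin a1 => f ⟨i.val, by have := i.isLt; omega⟩) P₃
        + splineError k β (fun i : Fin (N' - a1) => f ⟨a1 + i.val, by have := i.isLt; omega⟩) := by
    rw [hext2]
    exact segErrSum_append k β P₃ h12 _
  by_cases hB : N ≤ a1 + k
  · -- merge the last two segments
    have hA1N : a1 < N := lt_trans h12 hN'N
    have hmerge : segErrSum k β f (P₃.append hA1N)
        = segErrSum k β (fun i : Fin a1 => f ⟨i.val, by have := i.isLt; omega⟩) P₃
          + splineError k β (fun i : Fin (N - a1) => f ⟨a1 + i.val, by have := i.isLt; omega⟩) :=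
      segErrSum_append k β P₃ hA1N f
    have hle : segErrSum k β f (P₃.append hA1N) ≤ segErrSum k β f P := by
      have e0 : splineError k β
          (fun i : Fin (N - a1) => f ⟨a1 + i.val, by have := i.isLt; omega⟩) = 0 :=
        splineError_of_le k hβ (by omega) _
      rw [hPsplit, hsplit2]
      refine le_trans (le_of_eq hmerge) ?_
      refine le_trans (le_of_eq (congrArg (_ + ·) e0)) ?_
      refine le_trans (le_of_eq (add_zero _)) ?_
      exact le_add_of_le_of_nonneg
        (le_add_of_le_of_nonneg le_rfl (splineError_nonneg k hβ _)) (splineError_nonneg k hβ _)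
    obtain ⟨P', hg', he', hm'⟩ := ih (N + (m'' + 1)) (by omega) N f (P₃.append hA1N) le_rfl
    refine ⟨P', hg', he'.trans hle, ?_⟩
    have hc : (P₃.append hA1N).M = m'' + 1 := rfl
    omega
  · have h1k : a1 < N - k := by omega
    have hNkN : N - k < N := by omega
    have hQ1M : (P₃.append h1k).M = m'' + 1 := rfl
    have hQ1split : segErrSum k β
          (fun i : Fin (N - k) => f ⟨i.val, by have := i.isLt; omega⟩) (P₃.append h1k)
        = segErrSum k β (fun i : Fin a1 => f ⟨i.val, by have := i.isLt; omega⟩) P₃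
          + splineError k β
              (fun i : Fin ((N - k) - a1) => f ⟨a1 + i.val, by have := i.isLt; omega⟩) :=
      segErrSum_append k β P₃ h1k (fun i : Fin (N - k) => f ⟨i.val, by have := i.isLt; omega⟩)
    have hmono : splineError k β
          (fun i : Fin ((N - k) - a1) => f ⟨a1 + i.val, by have := i.isLt; omega⟩)
        ≤ splineError k β (fun i : Fin (N' - a1) => f ⟨a1 + i.val, by have := i.isLt; omega⟩) :=
      splineError_mono k hβ (show (N - k) - a1 ≤ N' - a1 by omega)
        (fun i : Fin (N' - a1) => f ⟨a1 + i.val, by have := i.isLt; omega⟩)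
    obtain ⟨Q1', hg1, he1, hm1⟩ := ih ((N - k) + (m'' + 1)) (by omega) (N - k)
      (fun i : Fin (N - k) => f ⟨i.val, by have := i.isLt; omega⟩) (P₃.append h1k) le_rfl
    refine ⟨Q1'.append hNkN, ?_, ?_, ?_⟩
    · intro mm hmm
      have hl := IPart.append_len Q1' hNkN mm
      rw [hl]
      split
      · next hlt => exact hg1 ⟨mm.val, hlt⟩ hmm
      · omega
    · have hfin : segErrSum k β f (Q1'.append hNkN)
          = segErrSum k β (fun i : Fin (N - k) => f ⟨i.val, by have := i.isLt; omega⟩) Q1'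
            + splineError k β (fun i : Fin (N - (N - k)) =>
                f ⟨(N - k) + i.val, by have := i.isLt; omega⟩) :=
        segErrSum_append k β Q1' hNkN f
      have e0 : splineError k β (fun i : Fin (N - (N - k)) =>
          f ⟨(N - k) + i.val, by have := i.isLt; omega⟩) = 0 :=
        splineError_of_le k hβ (by omega) _
      rw [hPsplit, hsplit2]
      refine le_trans (le_of_eq hfin) ?_
      refine le_trans (le_of_eq (congrArg (_ + ·) e0)) ?_
      refine le_trans (le_of_eq (add_zero _)) ?_
      refine le_trans (he1.trans (le_of_eq hQ1split)) ?_
      exact le_add_of_le_of_nonneg (add_le_add_right hmono _) (splineError_nonneg k hβ _)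
    · have hc : (Q1'.append hNkN).M = Q1'.M + 1 := rfl
      omega

/-- for each partition `𝓘` there is a partition `𝓘'` all of whose
segments (except possibly the leftmost one) have length at least `k`, with
`Σ_{I'∈𝓘'} E^{I'} ≤ Σ_{I∈𝓘} E^I` and `|𝓘'| ≤ |𝓘|`. -/
theorem exists_partition_min_segment_length (N k : ℕ) (β : ℝ) (hβ : 0 ≤ β)
    (f : Fin N → ℝ) (P : IPart N) :
    ∃ P' : IPart N, (∀ m : Fin P'.M, m.val ≠ 0 → k ≤ P'.len m) ∧
      segErrSum k β f P' ≤ segErrSum k β f P ∧ P'.M ≤ P.M := by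
  obtain ⟨P', h1, h2, h3⟩ := main_aux k β hβ (N + P.M) N f P le_rfl
  exact ⟨P', h1, h2, h3⟩
end

section
/- For fixed k ∈ ℕ, γ > 0, β ∈ (0,∞], the set of data f ∈ ℝ^N for which the higher order Mumford-Shah problem has a non-unique minimizer u* has Lebesgue measure zero. -/
open Finset Matrix

open scoped ENNReal

/-- The higher order Mumford-Shah/Potts functional, with elasticity parameter
`β ∈ (0,∞]` (an extended nonnegative real).  For finite `β` it is
`‖u - f‖₂² + β^{2k} Σ_{I∈𝓘} ‖∇ᵏ u_I‖₂² + γ|𝓘|`; for `β = ∞` (since `∞ * 0 = 0`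
in `ℝ≥0∞`), it is finite exactly when `∇ᵏ u_I = 0` on every segment, i.e. when
`u_I` is a polynomial of degree `≤ k-1` on every segment, and then equals
`‖u - f‖₂² + γ|𝓘|`. -/
noncomputable def msFE {N : ℕ} (k : ℕ) (β : ℝ≥0∞) (γ : ℝ) (f u : Fin N → ℝ)
    (P : IPart N) : ℝ≥0∞ :=
  ENNReal.ofReal (∑ i, (u i - f i) ^ 2)
    + β ^ (2 * k) *
        ENNReal.ofReal (∑ m : Fin P.M, diffEnergy k (P.len m) (P.restrict u m))
    + ENNReal.ofReal (γ * P.M)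

/-- inner product on `Fin N → ℝ` -/
noncomputable def ip {N : ℕ} (u v : Fin N → ℝ) : ℝ := ∑ i, u i * v i

lemma ip_comm {N : ℕ} (u v : Fin N → ℝ) : ip u v = ip v u := by
  simp [ip, mul_comm]

lemma ip_add_left {N : ℕ} (u v w : Fin N → ℝ) : ip (u + v) w = ip u w + ip v w := by
  simp [ip, add_mul, Finset.sum_add_distrib]

lemma ip_add_right {N : ℕ} (u v w : Fin N → ℝ) : ip u (v + w) = ip u v + ip u w := by
  simp [ip, mul_add, Finset.sum_add_distrib]

lemma ip_sub_left {N : ℕ} (u v w : Fin N → ℝ) : ip (u - v) w = ip u w - ip v w := by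
  simp [ip, sub_mul, Finset.sum_sub_distrib]

lemma ip_sub_right {N : ℕ} (u v w : Fin N → ℝ) : ip u (v - w) = ip u v - ip u w := by
  simp [ip, mul_sub, Finset.sum_sub_distrib]

lemma ip_smul_left {N : ℕ} (c : ℝ) (u v : Fin N → ℝ) : ip (c • u) v = c * ip u v := by
  simp [ip, Finset.mul_sum, mul_assoc]

lemma ip_smul_right {N : ℕ} (c : ℝ) (u v : Fin N → ℝ) : ip u (c • v) = c * ip u v := by
  simp [ip, Finset.mul_sum]; apply Finset.sum_congr rfl; intros; ring

lemma ip_self_nonneg {N : ℕ} (u : Fin N → ℝ) : 0 ≤ ip u u :=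
  Finset.sum_nonneg fun i _ => mul_self_nonneg _

lemma ip_self_eq_zero {N : ℕ} {u : Fin N → ℝ} (h : ip u u = 0) : u = 0 := by
  funext i
  have h2 := (Finset.sum_eq_zero_iff_of_nonneg (fun j _ => mul_self_nonneg (u j))).mp h i
    (Finset.mem_univ i)
  have := mul_self_eq_zero.mp h2
  simpa using this

lemma ip_zero_left {N : ℕ} (v : Fin N → ℝ) : ip 0 v = 0 := by simp [ip]

lemma ip_zero_right {N : ℕ} (v : Fin N → ℝ) : ip v 0 = 0 := by simp [ip]


open MeasureTheory in
lemma ip_quadratic_null_aux {n : ℕ} (D : (Fin (n+1) → ℝ) →ₗ[ℝ] (Fin (n+1) → ℝ))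
    (hsymm : ∀ x y, ip x (D y) = ip (D x) y) (c₀ : ℝ)
    (e : Fin (n+1) → ℝ) (ha : ip e (D e) ≠ 0) (i₀ : Fin (n+1)) (hi₀ : e i₀ ≠ 0) :
    MeasureTheory.volume {f : Fin (n+1) → ℝ | ip f (D f) = c₀} = 0 := by
  classical
  set d : Fin (n+1) → ℝ := e - Pi.single i₀ 1 with hd
  have hco : ∀ g : Fin (n+1) → ℝ, (g + g i₀ • d) i₀ = g i₀ * e i₀ := by
    intro g
    simp [hd, Pi.single_eq_same]
    ring
  set Φ : (Fin (n+1) → ℝ) ≃ₗ[ℝ] (Fin (n+1) → ℝ) :=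
    { toFun := fun g => g + g i₀ • d
      map_add' := fun g h => by simp [add_smul]; abel
      map_smul' := fun c g => by simp only [smul_eq_mul, Pi.smul_apply, RingHom.id_apply]; module
      invFun := fun h => h - (h i₀ / e i₀) • d
      left_inv := fun g => by
        simp only [hco, mul_div_assoc, div_self hi₀, mul_one]
        abel
      right_inv := fun h => by
        have h1 : (h - (h i₀ / e i₀) • d) i₀ = h i₀ / e i₀ := by
          simp [hd, Pi.single_eq_same]
          field_simp
          ring
        simp only [h1]
        abel } with hΦ
  set A : Set (Fin (n+1) → ℝ) := {f | ip f (D f) = c₀} with hA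
  -- reduce to preimage under Φ
  have hdet : LinearMap.det (Φ.toLinearMap) ≠ 0 :=
    isUnit_iff_ne_zero.mp Φ.isUnit_det'
  have hpre := MeasureTheory.Measure.addHaar_preimage_linearMap
    (volume : Measure (Fin (n+1) → ℝ)) hdet A
  have hfactor : ENNReal.ofReal |(LinearMap.det Φ.toLinearMap)⁻¹| ≠ 0 :=
    (ENNReal.ofReal_pos.2 (abs_pos.2 (inv_ne_zero hdet))).ne'
  suffices hnull : volume (Φ.toLinearMap ⁻¹' A) = 0 by
    rw [hnull] at hpre
    rcases mul_eq_zero.mp hpre.symm with h | h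
    · exact absurd h hfactor
    · exact h
  -- now Fubini via piFinSuccAbove
  set eM := MeasurableEquiv.piFinSuccAbove (fun _ : Fin (n+1) => ℝ) i₀ with heM
  have hMP := MeasureTheory.volume_preserving_piFinSuccAbove (fun _ : Fin (n+1) => ℝ) i₀
  set q : (Fin (n+1) → ℝ) → ℝ := fun g => ip (Φ g) (D (Φ g)) with hq
  set B : Set (ℝ × (Fin n → ℝ)) := {p | q (i₀.insertNth p.1 p.2) = c₀} with hB
  have hsy : ∀ p : ℝ × (Fin n → ℝ), eM.symm p = i₀.insertNth p.1 p.2 := by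
    intro p
    simp [heM, MeasurableEquiv.piFinSuccAbove_symm_apply, Fin.insertNthEquiv]
  have hpreB : Φ.toLinearMap ⁻¹' A = eM ⁻¹' B := by
    ext g
    have hgg : i₀.insertNth (eM g).1 (eM g).2 = g := by
      rw [← hsy (eM g), MeasurableEquiv.symm_apply_apply]
    simp only [Set.mem_preimage, hA, hB, Set.mem_setOf_eq, LinearEquiv.coe_coe, hgg]
    rfl
  -- continuity of q ∘ insertNth
  have hDc : Continuous fun g : Fin (n+1) → ℝ => D g := D.continuous_of_finiteDimensional
  have hΦc : Continuous fun g : Fin (n+1) → ℝ => Φ g := by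
    show Continuous fun g : Fin (n+1) → ℝ => g + g i₀ • d
    exact continuous_id.add ((continuous_apply i₀).smul continuous_const)
  have hipc : Continuous fun p : (Fin (n+1) → ℝ) × (Fin (n+1) → ℝ) => ip p.1 p.2 := by
    apply continuous_finset_sum
    intro i _
    exact ((continuous_apply i).comp continuous_fst).mul ((continuous_apply i).comp continuous_snd)
  have hqc : Continuous q := by
    have : Continuous fun g : Fin (n+1) → ℝ => (Φ g, D (Φ g)) := hΦc.prodMk (hDc.comp hΦc)
    exact hipc.comp this
  have hinsc : Continuous fun p : ℝ × (Fin n → ℝ) =>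
      (Fin.insertNth (α := fun _ => ℝ) i₀ p.1 p.2) := by
    apply continuous_pi
    have case1 : Continuous fun p : ℝ × (Fin n → ℝ) => (Fin.insertNth (α := fun _ => ℝ) i₀ p.1 p.2) i₀ := by
      simp only [Fin.insertNth_apply_same]; exact continuous_fst
    have case2 : ∀ j', Continuous fun p : ℝ × (Fin n → ℝ) =>
        (Fin.insertNth (α := fun _ => ℝ) i₀ p.1 p.2) (i₀.succAbove j') := by
      intro j'
      simp only [Fin.insertNth_apply_succAbove]
      exact (continuous_apply j').comp continuous_snd
    exact fun j => Fin.succAboveCases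
      (α := fun j => Continuous fun p : ℝ × (Fin n → ℝ) => (Fin.insertNth (α := fun _ => ℝ) i₀ p.1 p.2) j)
      i₀ case1 case2 j
  have hBmeas : MeasurableSet B := by
    have : Continuous fun p : ℝ × (Fin n → ℝ) => q (i₀.insertNth p.1 p.2) :=
      hqc.comp hinsc
    exact this.measurable (measurableSet_singleton c₀)
  rw [hpreB, hMP.measure_preimage hBmeas.nullMeasurableSet]
  -- slices of B are finite
  rw [MeasureTheory.Measure.volume_eq_prod, Measure.prod_apply_symm hBmeas]
  have hslice : ∀ y : Fin n → ℝ, volume ((fun x => (x, y)) ⁻¹' B) = 0 := by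
    intro y
    set w : Fin (n+1) → ℝ := Φ (i₀.insertNth 0 y) with hw
    have hins : ∀ x : ℝ, (Fin.insertNth (α := fun _ => ℝ) i₀ x y) =
        Fin.insertNth (α := fun _ => ℝ) i₀ 0 y + x • Pi.single (M := fun _ => ℝ) i₀ 1 := by
      intro x; funext j
      refine Fin.succAboveCases i₀ ?_ ?_ j
      · simp [Pi.single_eq_same]
      · intro j'
        simp [Fin.insertNth_apply_succAbove, Pi.single_eq_of_ne (Fin.succAbove_ne i₀ j')]
    have hδ : Φ (Pi.single (M := fun _ => ℝ) i₀ 1) = e := by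
      have hrfl : Φ (Pi.single (M := fun _ => ℝ) i₀ 1) =
          Pi.single (M := fun _ => ℝ) i₀ 1 + (Pi.single (M := fun _ => ℝ) i₀ 1 i₀) • d := rfl
      rw [hrfl]
      simp [hd, Pi.single_eq_same]
    have hkey : ∀ x : ℝ, q (i₀.insertNth x y) =
        ip e (D e) * x^2 + (2 * ip e (D w)) * x + ip w (D w) := by
      intro x
      rw [hq]
      have h1 : Φ (i₀.insertNth x y) = w + x • e := by
        rw [hins x, map_add, _root_.map_smul, hδ, ← hw]
      show ip (Φ (i₀.insertNth x y)) (D (Φ (i₀.insertNth x y))) = _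
      rw [h1, map_add, _root_.map_smul, ip_add_left, ip_add_right, ip_add_right,
        ip_smul_left, ip_smul_right, ip_smul_left, ip_smul_right]
      have h2 : ip w (D e) = ip e (D w) := by rw [hsymm, ip_comm]
      rw [h2]; ring
    have hfin : ((fun x => (x, y)) ⁻¹' B).Finite := by
      set a := ip e (D e)
      set bb := 2 * ip e (D w)
      set cc := ip w (D w)
      have hp : (Polynomial.C a * Polynomial.X^2 + Polynomial.C bb * Polynomial.X
          + Polynomial.C (cc - c₀) : Polynomial ℝ) ≠ 0 := by
        intro h
        have hc := congrArg (fun p => Polynomial.coeff p 2) h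
        simp [Polynomial.coeff_add, Polynomial.coeff_C] at hc
        exact ha hc
      refine Set.Finite.subset (Polynomial.finite_setOf_isRoot hp) ?_
      intro x hx
      have hx' : q (i₀.insertNth x y) = c₀ := hx
      rw [hkey x] at hx'
      simp only [Set.mem_setOf_eq, Polynomial.IsRoot, Polynomial.eval_add,
        Polynomial.eval_mul, Polynomial.eval_pow, Polynomial.eval_C, Polynomial.eval_X]
      linarith
    exact hfin.measure_zero _
  rw [MeasureTheory.lintegral_congr hslice]
  simp

/-- the core measure-zero lemma: level sets of a nonzero quadratic form are null -/
lemma ip_quadratic_null {N : ℕ} (D : (Fin N → ℝ) →ₗ[ℝ] (Fin N → ℝ))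
    (hsymm : ∀ x y, ip x (D y) = ip (D x) y) (hD : D ≠ 0) (c₀ : ℝ) :
    MeasureTheory.volume {f : Fin N → ℝ | ip f (D f) = c₀} = 0 := by
  classical
  -- find a direction with nonzero quadratic form
  have hexe : ∃ e : Fin N → ℝ, ip e (D e) ≠ 0 := by
    by_contra h
    push_neg at h
    apply hD
    apply LinearMap.ext
    intro f
    have key : ∀ g, ip g (D f) = 0 := by
      intro g
      have h1 : ip (g + f) (D (g + f)) = 0 := h _
      rw [map_add, ip_add_left, ip_add_right, ip_add_right] at h1
      have h2 : ip f (D g) = ip g (D f) := by rw [hsymm, ip_comm]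
      have h3 := h g; have h4 := h f
      nlinarith [h1, h2, h3, h4]
    have := key (D f)
    exact ip_self_eq_zero this
  obtain ⟨e, ha⟩ := hexe
  have he0 : e ≠ 0 := by rintro rfl; simp [map_zero, ip_zero_left] at ha
  obtain ⟨i₀, hi₀⟩ : ∃ i, e i ≠ 0 := by
    by_contra h; push_neg at h; exact he0 (funext fun i => h i)
  obtain ⟨n, rfl⟩ : ∃ n, N = n + 1 := ⟨N - 1, by have := i₀.pos; omega⟩
  exact ip_quadratic_null_aux D hsymm c₀ e ha i₀ hi₀

noncomputable def lf (k : ℕ) {N : ℕ} (P : IPart N) (m : Fin P.M) (i : Fin (P.len m - k))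
    (w : Fin N → ℝ) : ℝ :=
  ∑ j : Fin (k + 1), (-1 : ℝ) ^ (k - j.val) * (Nat.choose k j.val : ℝ) *
    P.restrict w m ⟨i.val + j.val, by have hi := i.isLt; have hj := j.isLt; omega⟩

lemma diffEnergy_restrict (k : ℕ) {N : ℕ} (P : IPart N) (m : Fin P.M) (w : Fin N → ℝ) :
    diffEnergy k (P.len m) (P.restrict w m) = ∑ i, (lf k P m i w) ^ 2 := rfl

lemma lf_add (k : ℕ) {N : ℕ} (P : IPart N) (m : Fin P.M) (i : Fin (P.len m - k))
    (u v : Fin N → ℝ) : lf k P m i (u + v) = lf k P m i u + lf k P m i v := by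
  simp [lf, IPart.restrict, mul_add, Finset.sum_add_distrib]

lemma lf_smul (k : ℕ) {N : ℕ} (P : IPart N) (m : Fin P.M) (i : Fin (P.len m - k))
    (c : ℝ) (u : Fin N → ℝ) : lf k P m i (c • u) = c * lf k P m i u := by
  simp only [lf, IPart.restrict, Pi.smul_apply, smul_eq_mul, Finset.mul_sum]
  apply Finset.sum_congr rfl; intros; ring

noncomputable def dip (k : ℕ) {N : ℕ} (P : IPart N) (u v : Fin N → ℝ) : ℝ :=
  ∑ m, ∑ i, lf k P m i u * lf k P m i v

noncomputable def Dtot (k : ℕ) {N : ℕ} (P : IPart N) (u : Fin N → ℝ) : ℝ :=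
  ∑ m, diffEnergy k (P.len m) (P.restrict u m)

lemma Dtot_eq_dip (k : ℕ) {N : ℕ} (P : IPart N) (u : Fin N → ℝ) :
    Dtot k P u = dip k P u u := by
  simp [Dtot, dip, diffEnergy_restrict, pow_two]

lemma dip_comm (k : ℕ) {N : ℕ} (P : IPart N) (u v : Fin N → ℝ) :
    dip k P u v = dip k P v u := by
  simp [dip, mul_comm]

lemma dip_add_left (k : ℕ) {N : ℕ} (P : IPart N) (u v w : Fin N → ℝ) :
    dip k P (u + v) w = dip k P u w + dip k P v w := by
  simp [dip, lf_add, add_mul, Finset.sum_add_distrib]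

lemma dip_add_right (k : ℕ) {N : ℕ} (P : IPart N) (u v w : Fin N → ℝ) :
    dip k P u (v + w) = dip k P u v + dip k P u w := by
  simp [dip, lf_add, mul_add, Finset.sum_add_distrib]

lemma dip_smul_left (k : ℕ) {N : ℕ} (P : IPart N) (c : ℝ) (u v : Fin N → ℝ) :
    dip k P (c • u) v = c * dip k P u v := by
  simp [dip, lf_smul, Finset.mul_sum, mul_assoc]

lemma dip_smul_right (k : ℕ) {N : ℕ} (P : IPart N) (c : ℝ) (u v : Fin N → ℝ) :
    dip k P u (c • v) = c * dip k P u v := by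
  rw [dip_comm, dip_smul_left, dip_comm]

lemma dip_self_nonneg (k : ℕ) {N : ℕ} (P : IPart N) (u : Fin N → ℝ) :
    0 ≤ dip k P u u :=
  Finset.sum_nonneg fun m _ => Finset.sum_nonneg fun i _ => mul_self_nonneg _

lemma lf_eq_zero_of_dip_self (k : ℕ) {N : ℕ} (P : IPart N) {u : Fin N → ℝ}
    (h : dip k P u u = 0) (m : Fin P.M) (i : Fin (P.len m - k)) : lf k P m i u = 0 := by
  have h1 : ∀ m ∈ Finset.univ, (∑ i, lf k P m i u * lf k P m i u) = 0 := by
    refine (Finset.sum_eq_zero_iff_of_nonneg fun m _ =>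
      Finset.sum_nonneg fun i _ => mul_self_nonneg _).mp h
  have h2 := (Finset.sum_eq_zero_iff_of_nonneg fun i _ => mul_self_nonneg _).mp
    (h1 m (Finset.mem_univ m)) i (Finset.mem_univ i)
  exact mul_self_eq_zero.mp h2

lemma dip_eq_zero_left (k : ℕ) {N : ℕ} (P : IPart N) {u : Fin N → ℝ}
    (h : dip k P u u = 0) (v : Fin N → ℝ) : dip k P u v = 0 := by
  simp [dip]
  apply Finset.sum_eq_zero; intro m _
  apply Finset.sum_eq_zero; intro i _
  rw [lf_eq_zero_of_dip_self k P h m i, zero_mul]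

lemma continuous_lf (k : ℕ) {N : ℕ} (P : IPart N) (m : Fin P.M) (i : Fin (P.len m - k)) :
    Continuous (lf k P m i) := by
  apply continuous_finset_sum
  intro j _
  exact continuous_const.mul (continuous_apply _)

lemma continuous_dip_diag (k : ℕ) {N : ℕ} (P : IPart N) :
    Continuous fun u => dip k P u u := by
  apply continuous_finset_sum
  intro m _
  apply continuous_finset_sum
  intro i _
  exact (continuous_lf k P m i).mul (continuous_lf k P m i)


lemma dip_sub_left (k : ℕ) {N : ℕ} (P : IPart N) (u v w : Fin N → ℝ) :
    dip k P (u - v) w = dip k P u w - dip k P v w := by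
  have h : u - v = u + (-1 : ℝ) • v := by module
  rw [h, dip_add_left, dip_smul_left]; ring

lemma dip_zero_left (k : ℕ) {N : ℕ} (P : IPart N) (v : Fin N → ℝ) :
    dip k P 0 v = 0 := by
  simpa using dip_smul_left k P 0 0 v

lemma bilin_expand {α : Type*} [AddCommGroup α] (B : α → α → ℝ)
    (haddl : ∀ x y z, B (x + y) z = B x z + B y z)
    (hsymm : ∀ x y, B x y = B y x) (w u : α) :
    B w w = B u u + B (w - u) (w - u) + 2 * B u (w - u) := by
  have haddr : ∀ x y z, B x (y + z) = B x y + B x z := by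
    intro x y z; rw [hsymm, haddl, hsymm y x, hsymm z x]
  have h : w = u + (w - u) := by abel
  calc B w w = B (u + (w - u)) (u + (w - u)) := by rw [← h]
    _ = B u u + B (w - u) (w - u) + 2 * B u (w - u) := by
        rw [haddl, haddr, haddr, hsymm (w - u) u]; ring

lemma quad_coeff_zero {a b : ℝ} (ha : 0 ≤ a) (h : ∀ t : ℝ, 0 ≤ a * t ^ 2 + b * t) :
    b = 0 := by
  by_contra hb
  have hpos : (0:ℝ) < a + 1 := by linarith
  set s : ℝ := 1 / (a + 1) with hs
  have hspos : 0 < s := by positivity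
  have hs1 : a * s < 1 := by
    rw [hs, mul_one_div, div_lt_one hpos]; linarith
  have h1 := h (-(b * s))
  have hb2 : 0 < b ^ 2 := by positivity
  nlinarith [mul_pos (mul_pos hb2 hspos) (sub_pos.mpr hs1)]

lemma ip_line_expand {N : ℕ} (u f x : Fin N → ℝ) (t : ℝ) :
    ip (u + t • x - f) (u + t • x - f)
      = ip (u - f) (u - f) + (2 * ip (u - f) x) * t + ip x x * t ^ 2 := by
  have h : u + t • x - f = (u - f) + t • x := by abel
  rw [h, ip_add_left, ip_add_right, ip_add_right, ip_smul_left, ip_smul_left,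
    ip_smul_right, ip_smul_right, ip_comm x (u - f)]
  ring

lemma dip_line_expand (k : ℕ) {N : ℕ} (P : IPart N) (u x : Fin N → ℝ) (t : ℝ) :
    dip k P (u + t • x) (u + t • x)
      = dip k P u u + (2 * dip k P u x) * t + dip k P x x * t ^ 2 := by
  rw [dip_add_left, dip_add_right, dip_add_right, dip_smul_left, dip_smul_left,
    dip_smul_right, dip_smul_right, dip_comm k P x u]
  ring

/-- existence of minimizers of coercive quadratic functionals on closed sets -/
lemma exists_min_on_closed {N : ℕ} (C : Set (Fin N → ℝ)) (hC : IsClosed C)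
    (w₀ : Fin N → ℝ) (hw₀ : w₀ ∈ C) (f : Fin N → ℝ) (ψ : (Fin N → ℝ) → ℝ)
    (hψc : Continuous ψ) (hψ0 : ∀ w, 0 ≤ ψ w) :
    ∃ u ∈ C, ∀ w ∈ C, ip (u - f) (u - f) + ψ u ≤ ip (w - f) (w - f) + ψ w := by
  classical
  set φ : (Fin N → ℝ) → ℝ := fun w => ip (w - f) (w - f) + ψ w with hφ
  have hipc : Continuous fun w : Fin N → ℝ => ip (w - f) (w - f) := by
    apply continuous_finset_sum
    intro i _
    exact ((continuous_apply i).sub continuous_const).mul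
      ((continuous_apply i).sub continuous_const)
  have hφc : Continuous φ := hipc.add hψc
  have hφ0 : ∀ w, 0 ≤ φ w := fun w => add_nonneg (ip_self_nonneg _) (hψ0 w)
  have hnorm : ∀ x : Fin N → ℝ, ‖x‖ ≤ Real.sqrt (ip x x) := by
    intro x
    refine (pi_norm_le_iff_of_nonneg (Real.sqrt_nonneg _)).mpr fun i => ?_
    rw [Real.norm_eq_abs, ← Real.sqrt_sq_eq_abs]
    apply Real.sqrt_le_sqrt
    rw [pow_two]
    exact Finset.single_le_sum (f := fun j => x j * x j)
      (fun j _ => mul_self_nonneg _) (Finset.mem_univ i)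
  set R : ℝ := Real.sqrt (φ w₀) with hR
  set C' := C ∩ Metric.closedBall f R with hC'
  have hw₀' : w₀ ∈ C' := by
    refine ⟨hw₀, ?_⟩
    rw [Metric.mem_closedBall, dist_eq_norm]
    calc ‖w₀ - f‖ ≤ Real.sqrt (ip (w₀ - f) (w₀ - f)) := hnorm _
      _ ≤ R := Real.sqrt_le_sqrt (by have := hψ0 w₀; simp only [hφ]; linarith)
  have hcomp : IsCompact C' := (isCompact_closedBall f R).inter_left hC
  obtain ⟨u, huC', hmin⟩ := hcomp.exists_isMinOn ⟨w₀, hw₀'⟩ hφc.continuousOn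
  have hmin' : ∀ w ∈ C', φ u ≤ φ w := fun w hw => hmin hw
  refine ⟨u, huC'.1, ?_⟩
  intro w hw
  by_cases hwb : w ∈ Metric.closedBall f R
  · exact hmin' w ⟨hw, hwb⟩
  · have h1 : R < ‖w - f‖ := by
      rw [Metric.mem_closedBall, dist_eq_norm] at hwb; linarith [not_le.mp hwb]
    have h3 : R < Real.sqrt (ip (w - f) (w - f)) := lt_of_lt_of_le h1 (hnorm _)
    have h2 : φ w₀ < ip (w - f) (w - f) := by
      nlinarith [Real.sq_sqrt (hφ0 w₀), Real.sq_sqrt (ip_self_nonneg (w - f)),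
        Real.sqrt_nonneg (φ w₀), Real.sqrt_nonneg (ip (w - f) (w - f))]
    have h4 : φ u ≤ φ w₀ := hmin' w₀ hw₀'
    have h5 := hψ0 w
    have h6 : φ w₀ = ip (w₀ - f) (w₀ - f) + ψ w₀ := rfl
    rw [h6] at h2
    simp only [hφ] at h4 ⊢
    linarith

/-- stationarity for the finite-β problem -/
def Crit (k : ℕ) (c : ℝ) {N : ℕ} (P : IPart N) (f u : Fin N → ℝ) : Prop :=
  ∀ x, ip (u - f) x + c * dip k P u x = 0

lemma exists_crit (k : ℕ) {N : ℕ} (P : IPart N) (c : ℝ) (hc : 0 ≤ c) (f : Fin N → ℝ) :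
    ∃ u, Crit k c P f u := by
  obtain ⟨u, -, hmin⟩ := exists_min_on_closed Set.univ isClosed_univ 0 (Set.mem_univ 0) f
    (fun w => c * dip k P w w) (continuous_const.mul (continuous_dip_diag k P))
    (fun w => mul_nonneg hc (dip_self_nonneg k P w))
  refine ⟨u, fun x => ?_⟩
  have key : ∀ t : ℝ, 0 ≤ (ip x x + c * dip k P x x) * t ^ 2
      + (2 * (ip (u - f) x + c * dip k P u x)) * t := by
    intro t
    have h1 := hmin (u + t • x) (Set.mem_univ _)
    rw [ip_line_expand, dip_line_expand] at h1
    nlinarith [h1]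
  have hcoef : 0 ≤ ip x x + c * dip k P x x :=
    add_nonneg (ip_self_nonneg x) (mul_nonneg hc (dip_self_nonneg k P x))
  have := quad_coeff_zero hcoef key
  linarith

lemma crit_unique {k : ℕ} {c : ℝ} (hc : 0 ≤ c) {N : ℕ} {P : IPart N} {f u v : Fin N → ℝ}
    (hu : Crit k c P f u) (hv : Crit k c P f v) : u = v := by
  have h1 := hu (u - v)
  have h2 := hv (u - v)
  have d1 : ip (u - f) (u - v) - ip (v - f) (u - v) = ip (u - v) (u - v) := by
    rw [← ip_sub_left]; congr 1; abel
  have d2 : dip k P u (u - v) - dip k P v (u - v) = dip k P (u - v) (u - v) := by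
    rw [← dip_sub_left]
  have e : ip (u - v) (u - v) + c * dip k P (u - v) (u - v) = 0 := by
    rw [← d1, ← d2]; linear_combination h1 - h2
  have hz : ip (u - v) (u - v) = 0 := by
    nlinarith [ip_self_nonneg (u - v), mul_nonneg hc (dip_self_nonneg k P (u - v))]
  have := ip_self_eq_zero hz
  exact sub_eq_zero.mp this

/-- the constraint set for `β = ∞` -/
def Kset (k : ℕ) {N : ℕ} (P : IPart N) : Set (Fin N → ℝ) := {w | dip k P w w = 0}

lemma Kset_closed (k : ℕ) {N : ℕ} (P : IPart N) : IsClosed (Kset k P) :=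
  isClosed_eq (continuous_dip_diag k P) continuous_const

lemma Kset_zero (k : ℕ) {N : ℕ} (P : IPart N) : (0 : Fin N → ℝ) ∈ Kset k P := by
  simp [Kset, dip_zero_left]

lemma Kset_add_smul {k : ℕ} {N : ℕ} {P : IPart N} {u x : Fin N → ℝ}
    (hu : u ∈ Kset k P) (hx : x ∈ Kset k P) (t : ℝ) : u + t • x ∈ Kset k P := by
  have hux := dip_eq_zero_left k P hu x
  show dip k P _ _ = 0
  rw [dip_line_expand]
  simp [Set.mem_setOf_eq.mp hu, Set.mem_setOf_eq.mp hx, hux]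

lemma Kset_sub {k : ℕ} {N : ℕ} {P : IPart N} {u v : Fin N → ℝ}
    (hu : u ∈ Kset k P) (hv : v ∈ Kset k P) : u - v ∈ Kset k P := by
  have h : u - v = u + (-1 : ℝ) • v := by module
  rw [h]; exact Kset_add_smul hu hv (-1)

/-- stationarity for the infinite-β problem -/
def CritP (k : ℕ) {N : ℕ} (P : IPart N) (f u : Fin N → ℝ) : Prop :=
  u ∈ Kset k P ∧ ∀ w ∈ Kset k P, ip (u - f) w = 0

lemma exists_critP (k : ℕ) {N : ℕ} (P : IPart N) (f : Fin N → ℝ) :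
    ∃ u, CritP k P f u := by
  obtain ⟨u, huK, hmin⟩ := exists_min_on_closed (Kset k P) (Kset_closed k P) 0
    (Kset_zero k P) f (fun _ => 0) continuous_const (fun _ => le_refl 0)
  refine ⟨u, huK, fun x hx => ?_⟩
  have key : ∀ t : ℝ, 0 ≤ ip x x * t ^ 2 + (2 * ip (u - f) x) * t := by
    intro t
    have h1 := hmin (u + t • x) (Kset_add_smul huK hx t)
    rw [ip_line_expand] at h1
    nlinarith [h1]
  have := quad_coeff_zero (ip_self_nonneg x) key
  linarith

lemma critP_unique {k : ℕ} {N : ℕ} {P : IPart N} {f u v : Fin N → ℝ}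
    (hu : CritP k P f u) (hv : CritP k P f v) : u = v := by
  have hK : u - v ∈ Kset k P := Kset_sub hu.1 hv.1
  have h1 := hu.2 _ hK
  have h2 := hv.2 _ hK
  have e : ip (u - v) (u - v) = 0 := by
    have d1 : ip (u - f) (u - v) - ip (v - f) (u - v) = ip (u - v) (u - v) := by
      rw [← ip_sub_left]; congr 1; abel
    linarith
  exact sub_eq_zero.mp (ip_self_eq_zero e)


lemma crit_add {k : ℕ} {c : ℝ} {N : ℕ} {P : IPart N} {f g u v : Fin N → ℝ}
    (hu : Crit k c P f u) (hv : Crit k c P g v) : Crit k c P (f + g) (u + v) := by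
  intro x
  have h : u + v - (f + g) = (u - f) + (v - g) := by abel
  rw [h, ip_add_left, dip_add_left]
  linear_combination hu x + hv x

lemma crit_smul {k : ℕ} {c : ℝ} {N : ℕ} {P : IPart N} {f u : Fin N → ℝ} (r : ℝ)
    (hu : Crit k c P f u) : Crit k c P (r • f) (r • u) := by
  intro x
  have h : r • u - r • f = r • (u - f) := by module
  rw [h, ip_smul_left, dip_smul_left]
  linear_combination r * hu x

lemma critP_add {k : ℕ} {N : ℕ} {P : IPart N} {f g u v : Fin N → ℝ}
    (hu : CritP k P f u) (hv : CritP k P g v) : CritP k P (f + g) (u + v) := by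
  refine ⟨?_, ?_⟩
  · have := Kset_add_smul hu.1 hv.1 1
    rwa [one_smul] at this
  · intro w hw
    have h : u + v - (f + g) = (u - f) + (v - g) := by abel
    rw [h, ip_add_left, hu.2 w hw, hv.2 w hw]
    ring

lemma critP_smul {k : ℕ} {N : ℕ} {P : IPart N} {f u : Fin N → ℝ} (r : ℝ)
    (hu : CritP k P f u) : CritP k P (r • f) (r • u) := by
  refine ⟨?_, ?_⟩
  · have := Kset_add_smul (Kset_zero k P) hu.1 r
    rwa [zero_add] at this
  · intro w hw
    have h : r • u - r • f = r • (u - f) := by module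
    rw [h, ip_smul_left, hu.2 w hw, mul_zero]

noncomputable def Umap (k : ℕ) (β : ℝ≥0∞) {N : ℕ} (P : IPart N) (f : Fin N → ℝ) :
    Fin N → ℝ :=
  if β ^ (2 * k) = ⊤ then Classical.choose (exists_critP k P f)
  else Classical.choose
    (exists_crit k P (β ^ (2 * k)).toReal ENNReal.toReal_nonneg f)

lemma Umap_spec_top {k : ℕ} {β : ℝ≥0∞} (h : β ^ (2 * k) = ⊤) {N : ℕ} (P : IPart N)
    (f : Fin N → ℝ) : CritP k P f (Umap k β P f) := by
  rw [Umap, if_pos h]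
  exact Classical.choose_spec _

lemma Umap_spec_fin {k : ℕ} {β : ℝ≥0∞} (h : β ^ (2 * k) ≠ ⊤) {N : ℕ} (P : IPart N)
    (f : Fin N → ℝ) : Crit k (β ^ (2 * k)).toReal P f (Umap k β P f) := by
  rw [Umap, if_neg h]
  exact Classical.choose_spec _

lemma Umap_add (k : ℕ) (β : ℝ≥0∞) {N : ℕ} (P : IPart N) (f g : Fin N → ℝ) :
    Umap k β P (f + g) = Umap k β P f + Umap k β P g := by
  by_cases h : β ^ (2 * k) = ⊤
  · exact critP_unique (Umap_spec_top h P (f + g))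
      (critP_add (Umap_spec_top h P f) (Umap_spec_top h P g))
  · exact crit_unique ENNReal.toReal_nonneg (Umap_spec_fin h P (f + g))
      (crit_add (Umap_spec_fin h P f) (Umap_spec_fin h P g))

lemma Umap_smul (k : ℕ) (β : ℝ≥0∞) {N : ℕ} (P : IPart N) (r : ℝ) (f : Fin N → ℝ) :
    Umap k β P (r • f) = r • Umap k β P f := by
  by_cases h : β ^ (2 * k) = ⊤
  · exact critP_unique (Umap_spec_top h P (r • f)) (critP_smul r (Umap_spec_top h P f))
  · exact crit_unique ENNReal.toReal_nonneg (Umap_spec_fin h P (r • f))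
      (crit_smul r (Umap_spec_fin h P f))

noncomputable def Slin (k : ℕ) (β : ℝ≥0∞) {N : ℕ} (P : IPart N) :
    (Fin N → ℝ) →ₗ[ℝ] (Fin N → ℝ) where
  toFun := Umap k β P
  map_add' := Umap_add k β P
  map_smul' := Umap_smul k β P

lemma Umap_symm (k : ℕ) (β : ℝ≥0∞) {N : ℕ} (P : IPart N) (f g : Fin N → ℝ) :
    ip f (Umap k β P g) = ip g (Umap k β P f) := by
  by_cases h : β ^ (2 * k) = ⊤
  · obtain ⟨huK, huO⟩ := Umap_spec_top h P f
    obtain ⟨hvK, hvO⟩ := Umap_spec_top h P g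
    have h1 := huO _ hvK
    have h2 := hvO _ huK
    rw [ip_sub_left] at h1 h2
    have h3 := ip_comm (Umap k β P f) (Umap k β P g)
    have h4 := ip_comm f (Umap k β P g)
    have h5 := ip_comm g (Umap k β P f)
    linarith
  · have hu := Umap_spec_fin h P f
    have hv := Umap_spec_fin h P g
    have h1 := hu (Umap k β P g)
    have h2 := hv (Umap k β P f)
    rw [ip_sub_left] at h1 h2
    have h3 := ip_comm (Umap k β P f) (Umap k β P g)
    have h4 := ip_comm f (Umap k β P g)
    have h5 := ip_comm g (Umap k β P f)
    have h6 := dip_comm k P (Umap k β P f) (Umap k β P g)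
    linear_combination h2 - h1 + h3 + (β ^ (2 * k)).toReal * h6

lemma crit_val {k : ℕ} {c : ℝ} {N : ℕ} {P : IPart N} {f u : Fin N → ℝ}
    (hu : Crit k c P f u) :
    ip (u - f) (u - f) + c * dip k P u u = ip f f - ip f u := by
  have h1 := hu u
  rw [ip_sub_left] at h1
  rw [ip_sub_left, ip_sub_right, ip_sub_right]
  have h2 := ip_comm u f
  linarith

lemma critP_val {k : ℕ} {N : ℕ} {P : IPart N} {f u : Fin N → ℝ}
    (hu : CritP k P f u) :
    ip (u - f) (u - f) = ip f f - ip f u := by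
  have h1 := hu.2 u hu.1
  rw [ip_sub_left] at h1
  rw [ip_sub_left, ip_sub_right, ip_sub_right]
  have h2 := ip_comm u f
  linarith

lemma phi_expand {k : ℕ} {c : ℝ} {N : ℕ} {P : IPart N} {f u : Fin N → ℝ}
    (hu : Crit k c P f u) (w : Fin N → ℝ) :
    ip (w - f) (w - f) + c * dip k P w w
      = (ip (u - f) (u - f) + c * dip k P u u)
        + (ip (w - u) (w - u) + c * dip k P (w - u) (w - u)) := by
  have e1 := bilin_expand ip ip_add_left ip_comm (w - f) (u - f)
  have h3 : w - f - (u - f) = w - u := by abel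
  rw [h3] at e1
  have e2 := bilin_expand (dip k P) (dip_add_left k P) (dip_comm k P) w u
  have h4 := hu (w - u)
  linear_combination e1 + c * e2 + 2 * h4

/-! msFE bridging -/

lemma msFE_def' {N : ℕ} (k : ℕ) (β : ℝ≥0∞) (γ : ℝ) (f u : Fin N → ℝ) (P : IPart N) :
    msFE k β γ f u P = ENNReal.ofReal (ip (u - f) (u - f))
      + β ^ (2 * k) * ENNReal.ofReal (dip k P u u) + ENNReal.ofReal (γ * P.M) := by
  have h1 : ∑ i, (u i - f i) ^ 2 = ip (u - f) (u - f) := by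
    simp [ip, pow_two]
  have h2 : ∑ m : Fin P.M, diffEnergy k (P.len m) (P.restrict u m) = dip k P u u := by
    rw [← Dtot, Dtot_eq_dip]
  rw [msFE, h1, h2]

lemma msFE_fin {N : ℕ} {k : ℕ} {β : ℝ≥0∞} (h : β ^ (2 * k) ≠ ⊤) {γ : ℝ} (hγ0 : 0 ≤ γ)
    (f u : Fin N → ℝ) (P : IPart N) :
    msFE k β γ f u P = ENNReal.ofReal
      ((ip (u - f) (u - f) + (β ^ (2 * k)).toReal * dip k P u u) + γ * P.M) := by
  rw [msFE_def']
  rw [ENNReal.ofReal_add (add_nonneg (ip_self_nonneg _)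
    (mul_nonneg ENNReal.toReal_nonneg (dip_self_nonneg k P u)))
    (mul_nonneg hγ0 (Nat.cast_nonneg _)),
    ENNReal.ofReal_add (ip_self_nonneg _)
    (mul_nonneg ENNReal.toReal_nonneg (dip_self_nonneg k P u)),
    ENNReal.ofReal_mul ENNReal.toReal_nonneg, ENNReal.ofReal_toReal h]

lemma msFE_top_mem {N : ℕ} {k : ℕ} {β : ℝ≥0∞} (h : β ^ (2 * k) = ⊤) {γ : ℝ} (hγ0 : 0 ≤ γ)
    {u : Fin N → ℝ} {P : IPart N} (hu : dip k P u u = 0) (f : Fin N → ℝ) :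
    msFE k β γ f u P = ENNReal.ofReal (ip (u - f) (u - f) + γ * P.M) := by
  rw [msFE_def', hu]
  simp [ENNReal.ofReal_add (ip_self_nonneg (u - f)) (mul_nonneg hγ0 (Nat.cast_nonneg _))]

lemma msFE_top_not {N : ℕ} {k : ℕ} {β : ℝ≥0∞} (h : β ^ (2 * k) = ⊤)
    {γ : ℝ} {u : Fin N → ℝ} {P : IPart N} (hu : dip k P u u ≠ 0) (f : Fin N → ℝ) :
    msFE k β γ f u P = ⊤ := by
  have hpos : 0 < dip k P u u := lt_of_le_of_ne (dip_self_nonneg k P u) (Ne.symm hu)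
  rw [msFE_def', h, ENNReal.top_mul (ENNReal.ofReal_pos.mpr hpos).ne']
  simp

/-- fact 1 : `Umap` minimizes within its own partition -/
lemma Umap_min {N : ℕ} (k : ℕ) (β : ℝ≥0∞) {γ : ℝ} (hγ0 : 0 ≤ γ) (P : IPart N)
    (f w : Fin N → ℝ) :
    msFE k β γ f (Umap k β P f) P ≤ msFE k β γ f w P := by
  by_cases h : β ^ (2 * k) = ⊤
  · obtain ⟨hUK, hUO⟩ := Umap_spec_top h P f
    by_cases hw : dip k P w w = 0
    · rw [msFE_top_mem h hγ0 hUK f, msFE_top_mem h hγ0 hw f]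
      apply ENNReal.ofReal_le_ofReal
      have e := bilin_expand ip ip_add_left ip_comm (w - f) (Umap k β P f - f)
      have h3 : w - f - (Umap k β P f - f) = w - Umap k β P f := by abel
      rw [h3] at e
      have horth := hUO _ (Kset_sub hw hUK)
      have hnn := ip_self_nonneg (w - Umap k β P f)
      linarith
    · rw [msFE_top_not h hw f]
      exact le_top
  · rw [msFE_fin h hγ0 f _ P, msFE_fin h hγ0 f w P]
    apply ENNReal.ofReal_le_ofReal
    have e := phi_expand (Umap_spec_fin h P f) w
    have hnn := ip_self_nonneg (w - Umap k β P f)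
    have hnn2 := mul_nonneg (ENNReal.toReal_nonneg (a := β ^ (2 * k)))
      (dip_self_nonneg k P (w - Umap k β P f))
    linarith

/-- fact 2 : a minimizer within a partition equals `Umap` -/
lemma eq_Umap_of_min {N : ℕ} {k : ℕ} {β : ℝ≥0∞} {γ : ℝ} (hγ0 : 0 ≤ γ) {P : IPart N}
    {f u : Fin N → ℝ}
    (hu : msFE k β γ f u P ≤ msFE k β γ f (Umap k β P f) P) : u = Umap k β P f := by
  by_cases h : β ^ (2 * k) = ⊤
  · obtain ⟨hUK, hUO⟩ := Umap_spec_top h P f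
    have hfin : msFE k β γ f (Umap k β P f) P ≠ ⊤ := by
      rw [msFE_top_mem h hγ0 hUK f]
      exact ENNReal.ofReal_ne_top
    have hufin : msFE k β γ f u P ≠ ⊤ := ne_top_of_le_ne_top hfin hu
    have hud : dip k P u u = 0 := by
      by_contra hd
      rw [msFE_top_not h hd f] at hufin
      exact hufin rfl
    rw [msFE_top_mem h hγ0 hud f, msFE_top_mem h hγ0 hUK f] at hu
    have hle := (ENNReal.ofReal_le_ofReal_iff
      (add_nonneg (ip_self_nonneg _) (mul_nonneg hγ0 (Nat.cast_nonneg _)))).mp hu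
    have e := bilin_expand ip ip_add_left ip_comm (u - f) (Umap k β P f - f)
    have h3 : u - f - (Umap k β P f - f) = u - Umap k β P f := by abel
    rw [h3] at e
    have horth := hUO _ (Kset_sub hud hUK)
    have hz : ip (u - Umap k β P f) (u - Umap k β P f) = 0 :=
      le_antisymm (by linarith) (ip_self_nonneg _)
    exact sub_eq_zero.mp (ip_self_eq_zero hz)
  · rw [msFE_fin h hγ0 f u P, msFE_fin h hγ0 f _ P] at hu
    have hle := (ENNReal.ofReal_le_ofReal_iff (add_nonneg (add_nonneg (ip_self_nonneg _)
      (mul_nonneg ENNReal.toReal_nonneg (dip_self_nonneg k P _)))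
      (mul_nonneg hγ0 (Nat.cast_nonneg _)))).mp hu
    have e := phi_expand (Umap_spec_fin h P f) u
    have hnn2 := mul_nonneg (ENNReal.toReal_nonneg (a := β ^ (2 * k)))
      (dip_self_nonneg k P (u - Umap k β P f))
    have hz : ip (u - Umap k β P f) (u - Umap k β P f) = 0 :=
      le_antisymm (by linarith) (ip_self_nonneg _)
    exact sub_eq_zero.mp (ip_self_eq_zero hz)

/-- fact 3 : the optimal value -/
lemma Umap_val {N : ℕ} (k : ℕ) (β : ℝ≥0∞) {γ : ℝ} (hγ0 : 0 ≤ γ) (P : IPart N)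
    (f : Fin N → ℝ) :
    msFE k β γ f (Umap k β P f) P
      = ENNReal.ofReal ((ip f f - ip f (Umap k β P f)) + γ * P.M)
    ∧ 0 ≤ ip f f - ip f (Umap k β P f) := by
  by_cases h : β ^ (2 * k) = ⊤
  · obtain ⟨hUK, hUO⟩ := Umap_spec_top h P f
    have hval := critP_val ⟨hUK, hUO⟩
    constructor
    · rw [msFE_top_mem h hγ0 hUK f, hval]
    · rw [← hval]; exact ip_self_nonneg _
  · have hval := crit_val (Umap_spec_fin h P f)
    constructor
    · rw [msFE_fin h hγ0 f _ P, hval]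
    · rw [← hval]
      exact add_nonneg (ip_self_nonneg _)
        (mul_nonneg ENNReal.toReal_nonneg (dip_self_nonneg k P _))


instance IPart.countable (N : ℕ) : Countable (IPart N) := by
  have hinj : Function.Injective
      (fun P : IPart N => (⟨P.M, P.b⟩ : Σ M : ℕ, (Fin (M + 1) → ℕ))) := by
    rintro ⟨M1, b1, m1, f1, l1⟩ ⟨M2, b2, m2, f2, l2⟩ h
    injection h with hM hb
    subst hM
    cases eq_of_heq hb
    rfl
  exact hinj.countable

noncomputable def badPQ (k : ℕ) (β : ℝ≥0∞) (γ : ℝ) {N : ℕ} (P Q : IPart N) :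
    Set (Fin N → ℝ) :=
  {f | Umap k β P f ≠ Umap k β Q f ∧
    ip f f - ip f (Umap k β P f) + γ * P.M = ip f f - ip f (Umap k β Q f) + γ * Q.M}

lemma badPQ_null (k : ℕ) (β : ℝ≥0∞) (γ : ℝ) {N : ℕ} (P Q : IPart N) :
    MeasureTheory.volume (badPQ k β γ P Q) = 0 := by
  classical
  set D : (Fin N → ℝ) →ₗ[ℝ] (Fin N → ℝ) := Slin k β Q - Slin k β P with hD
  have happ : ∀ f, D f = Umap k β Q f - Umap k β P f := by
    intro f; rfl
  by_cases hDz : D = 0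
  · have hempty : badPQ k β γ P Q = ∅ := by
      ext f
      simp only [badPQ, Set.mem_setOf_eq, Set.mem_empty_iff_false, iff_false, not_and]
      intro hne
      exfalso
      apply hne
      have h0 : D f = 0 := by rw [hDz]; rfl
      rw [happ f] at h0
      have := sub_eq_zero.mp h0
      exact this.symm
    rw [hempty]
    simp
  · have hsym : ∀ x y, ip x (D y) = ip (D x) y := by
      intro x y
      rw [happ, happ, ip_sub_right, ip_sub_left]
      have h1 := Umap_symm k β Q x y
      have h2 := Umap_symm k β P x y
      have h3 := ip_comm (Umap k β Q x) y
      have h4 := ip_comm (Umap k β P x) y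
      have h5 := ip_comm y (Umap k β Q x)
      have h6 := ip_comm y (Umap k β P x)
      linarith
    have hmain := ip_quadratic_null D hsym hDz (γ * Q.M - γ * P.M)
    apply MeasureTheory.measure_mono_null ?_ hmain
    intro f hf
    obtain ⟨-, heq⟩ := hf
    show ip f (D f) = _
    rw [happ, ip_sub_right]
    linarith

/-- for fixed `k ∈ ℕ`, `γ > 0`, `β ∈ (0,∞]`, the set of data
`f ∈ ℝ^N` for which the higher order Mumford-Shah problem has a non-unique
minimizer `u*` has Lebesgue measure zero. -/
theorem mumford_shah_nonunique_measure_zero (N k : ℕ) (γ : ℝ) (hγ : 0 < γ)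
    (β : ℝ≥0∞) (hβ : 0 < β) :
    MeasureTheory.volume {f : Fin N → ℝ | ∃ u v : Fin N → ℝ, u ≠ v ∧
      (∃ P : IPart N, ∀ (w : Fin N → ℝ) (Q : IPart N),
        msFE k β γ f u P ≤ msFE k β γ f w Q) ∧
      (∃ P : IPart N, ∀ (w : Fin N → ℝ) (Q : IPart N),
        msFE k β γ f v P ≤ msFE k β γ f w Q)} = 0 := by
  have hγ0 : 0 ≤ γ := le_of_lt hγ
  apply MeasureTheory.measure_mono_null
    (t := ⋃ PQ : IPart N × IPart N, badPQ k β γ PQ.1 PQ.2)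
  · rintro f ⟨u, v, huv, ⟨P, hP⟩, ⟨Q, hQ⟩⟩
    refine Set.mem_iUnion.mpr ⟨(P, Q), ?_⟩
    have hu : u = Umap k β P f := eq_Umap_of_min hγ0 (hP (Umap k β P f) P)
    have hv : v = Umap k β Q f := eq_Umap_of_min hγ0 (hQ (Umap k β Q f) Q)
    have h1 : msFE k β γ f u P = msFE k β γ f v Q := le_antisymm (hP v Q) (hQ u P)
    rw [hu, hv] at h1 huv
    obtain ⟨hvalP, hnnP⟩ := Umap_val k β hγ0 P f
    obtain ⟨hvalQ, hnnQ⟩ := Umap_val k β hγ0 Q f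
    rw [hvalP, hvalQ] at h1
    have h2 := (ENNReal.ofReal_eq_ofReal_iff
      (add_nonneg hnnP (mul_nonneg hγ0 (Nat.cast_nonneg _)))
      (add_nonneg hnnQ (mul_nonneg hγ0 (Nat.cast_nonneg _)))).mp h1
    exact ⟨huv, h2⟩
  · exact MeasureTheory.measure_iUnion_null fun PQ => badPQ_null k β γ PQ.1 PQ.2
end

section
/- Pruning correctness (search-space truncation): if the current candidate value P_r satisfies P_r < E^{l:r} + γ for some l, then for all l' ≤ l we have E^{l':r} + γ + P*_{l'-1} > P_r; hence P*_r is attained among indices l'' > l (or equals P_r). -/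
open Finset Matrix

/-- Value `Σ_{I∈𝓘} (E^I + γ)` of a partition of `{1,...,r}`, where `E l r` denotes
the (abstract, nonnegative) approximation error on the 0-indexed half-open
interval `[l, r)`. -/
noncomputable def Pval (E : ℕ → ℕ → ℝ) (γ : ℝ) {r : ℕ} (P : IPart r) : ℝ :=
  ∑ m : Fin P.M, (E (P.b m.castSucc) (P.b m.succ) + γ)

/-- `P*_r`: the minimal value of `Σ_{I∈𝓘}(E^I + γ)` over all partitions of
`{1,...,r}` (so `P*_0 = 0`, via the empty partition). -/
noncomputable def Pstar (E : ℕ → ℕ → ℝ) (γ : ℝ) (r : ℕ) : ℝ :=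
  sInf {x | ∃ P : IPart r, x = Pval E γ P}

/-- search-space truncation pruning correctness: if the current
candidate value `P_r` (which is `≥ P*_r` and achieved by some admissible last
segment `[l'', r)`) satisfies `P_r < E^{l:r} + γ` for some `l`, then for all
`l' ≤ l` we have `E^{l':r} + γ + P*_{l'} > P_r`; hence `P*_r` is attained among
indices `> l` (or equals `P_r`). -/
theorem truncation_pruning (E : ℕ → ℕ → ℝ) (hE : ∀ l r, 0 ≤ E l r)
    (hmono : ∀ l' l r, l' ≤ l → E l r ≤ E l' r)
    (γ : ℝ) (hγ : 0 < γ) (r l : ℕ) (hl : l < r)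
    (Pr : ℝ) (hach : ∃ l'' < r, Pr = E l'' r + γ + Pstar E γ l'')
    (hge : Pstar E γ r ≤ Pr)
    (hcond : Pr < E l r + γ) :
    ∀ l' ≤ l, Pr < E l' r + γ + Pstar E γ l' := by
  intro l' hl'
  have hPs : 0 ≤ Pstar E γ l' := by
    apply Real.sInf_nonneg
    rintro x ⟨P, rfl⟩
    apply Finset.sum_nonneg
    intro m _
    have := hE (P.b m.castSucc) (P.b m.succ)
    linarith
  have := hmono l' l r hl'
  linarith
end
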